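/- (Lower bound on the node certainty index.) For every node k ∈ {1,…,n}, the node certainty index satisfies μ_k ≥ 2nλ₂/(n − 1), where λ₂ is the smallest positive eigenvalue of L; equivalently, Σ_{p=2}^n (u_k⁽ᵖ⁾)²/(2λ_p) ≤ (n − 1)/(2nλ₂). -/

import Mathlib

open Finset Matrix

/-- **Lower bound on the node certainty index.**
For every node `k`, the node certainty index `μ_k`, defined by
`1/μ_k = Σ_{p≠1} (u_k⁽ᵖ⁾)²/(2λ_p)`, satisfies `μ_k ≥ 2nλ₂/(n − 1)` where `λ₂` is the smallest
positive eigenvalue of `L`. -/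
theorem node_certainty_index_lower_bound
    (n : ℕ) [NeZero n] (hn : 2 ≤ n)
    (L : Matrix (Fin n) (Fin n) ℝ)
    (hsymm : L.IsSymm) (hpsd : L.PosSemidef)
    (hL1 : L *ᵥ (fun _ => (1 : ℝ)) = 0)
    (hker : ∀ v : Fin n → ℝ, L *ᵥ v = 0 → ∃ c : ℝ, v = fun _ => c)
    (lam : Fin n → ℝ) (u : Fin n → Fin n → ℝ)
    (hlam0 : lam 0 = 0)
    (hlampos : ∀ p : Fin n, p ≠ 0 → 0 < lam p)
    (hmono : Monotone lam)
    (heig : ∀ p : Fin n, L *ᵥ u p = lam p • u p)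
    (horth : ∀ p q : Fin n, ∑ j, u p j * u q j = if p = q then (1 : ℝ) else 0)
    (hu0 : u 0 = fun _ => 1 / Real.sqrt n)
    (k : Fin n) (μ : ℝ) (hμpos : 0 < μ)
    (hμ : 1 / μ = ∑ p ∈ Finset.univ.erase (0 : Fin n), (u p k) ^ 2 / (2 * lam p)) :
    2 * (n : ℝ) * lam (⟨1, by omega⟩ : Fin n) / ((n : ℝ) - 1) ≤ μ := by
  set p1 : Fin n := (⟨1, by omega⟩ : Fin n) with hp1
  have hnpos : (0 : ℝ) < n := by positivity
  have hlam2 : 0 < lam p1 := hlampos p1 (by simp [hp1, Fin.ext_iff])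
  -- row orthonormality
  have hMMT : (Matrix.of u) * (Matrix.of u)ᵀ = 1 := by
    ext p q
    simpa [Matrix.mul_apply, Matrix.one_apply] using horth p q
  have hMTM : (Matrix.of u)ᵀ * (Matrix.of u) = 1 := mul_eq_one_comm.mp hMMT
  have hrow : ∑ p, (u p k) ^ 2 = 1 := by
    have := congrFun (congrFun hMTM k) k
    simp only [Matrix.mul_apply, Matrix.transpose_apply, Matrix.of_apply,
      Matrix.one_apply_eq] at this
    simpa [sq] using this
  have hu0k : (u 0 k) ^ 2 = 1 / n := by
    rw [hu0]
    have : Real.sqrt n ^ 2 = n := Real.sq_sqrt (le_of_lt hnpos)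
    field_simp
    exact this.symm
  have herase : ∑ p ∈ Finset.univ.erase (0 : Fin n), (u p k) ^ 2 = 1 - 1 / n := by
    have := Finset.add_sum_erase Finset.univ (fun p => (u p k) ^ 2)
      (Finset.mem_univ (0 : Fin n))
    rw [hrow] at this
    simp only [hu0k] at this
    linarith
  have hsum : (1 : ℝ) / μ ≤ ((n : ℝ) - 1) / (2 * n * lam p1) := by
    rw [hμ]
    calc ∑ p ∈ Finset.univ.erase (0 : Fin n), (u p k) ^ 2 / (2 * lam p)
        ≤ ∑ p ∈ Finset.univ.erase (0 : Fin n), (u p k) ^ 2 / (2 * lam p1) := by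
          apply Finset.sum_le_sum
          intro p hp
          have hp0 : p ≠ 0 := Finset.ne_of_mem_erase hp
          have hle : lam p1 ≤ lam p := by
            apply hmono
            have : 1 ≤ (p : ℕ) := Nat.one_le_iff_ne_zero.mpr
              (fun h => hp0 (Fin.ext h))
            exact this
          gcongr
      _ = ((n : ℝ) - 1) / (2 * n * lam p1) := by
          rw [← Finset.sum_div, herase,
            div_eq_div_iff (by positivity) (by positivity)]
          have hne : (n : ℝ) ≠ 0 := ne_of_gt hnpos
          field_simp
  have hn1 : (0 : ℝ) < (n : ℝ) - 1 := by
    have : (2 : ℝ) ≤ n := by exact_mod_cast hn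
    linarith
  rw [div_le_iff₀ hn1]
  rw [div_le_div_iff₀ hμpos (by positivity)] at hsum
  nlinarith
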